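/- arXiv:2305.07638 — 4 statements merged into one kernel-verified Lean document; each statement's English description precedes it below -/
import Mathlib

section
/- For any square matrix C ∈ ℝ^{n×n} and any subset S ⊆ {1,…,n} with |S| = 2, the nuclear norm satisfies ‖C‖_* ≥ Σ_{i ∉ S} |C_{ii}| + ‖C_{S,S}‖_*, where C_{S,S} is the 2×2 principal submatrix of C indexed by S. -/
open Matrix

/-- Singular values of a real matrix: square roots of eigenvalues of `C * Cᴴ`. -/
noncomputable def singularValues {n m : ℕ} (C : Matrix (Fin n) (Fin m) ℝ) : Fin n → ℝ :=
  fun i => Real.sqrt ((Matrix.isHermitian_mul_conjTranspose_self C).eigenvalues i)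

/-- The nuclear norm of a real square matrix: the sum of its singular values. -/
noncomputable def nuclearNorm {n : ℕ} (C : Matrix (Fin n) (Fin n) ℝ) : ℝ :=
  ∑ i, singularValues C i

namespace NucAux
variable {m : ℕ}

lemma dot_conjT (M : Matrix (Fin m) (Fin m) ℝ) (x y : Fin m → ℝ) :
    (Mᴴ *ᵥ x) ⬝ᵥ y = x ⬝ᵥ (M *ᵥ y) := by
  rw [mulVec_conjTranspose, dotProduct_mulVec]
  simp

lemma dot_quad (B M : Matrix (Fin m) (Fin m) ℝ) (i : Fin m) :
    (Bᴴ * M * B) i i = (fun k => B k i) ⬝ᵥ (M *ᵥ (fun k => B k i)) := by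
  simp only [mul_apply, conjTranspose_apply, dotProduct, mulVec, Finset.sum_mul,
    Finset.mul_sum, star_trivial]
  rw [Finset.sum_comm]
  apply Finset.sum_congr rfl; intro k _
  apply Finset.sum_congr rfl; intro l _
  ring

lemma trace_le (C W : Matrix (Fin m) (Fin m) ℝ)
    (hW : ∀ x : Fin m → ℝ, (Wᴴ *ᵥ x) ⬝ᵥ (Wᴴ *ᵥ x) ≤ x ⬝ᵥ x) :
    trace (Wᴴ * C) ≤ nuclearNorm C := by
  set hA := isHermitian_mul_conjTranspose_self C with hhA
  set U : Matrix (Fin m) (Fin m) ℝ := (hA.eigenvectorUnitary : Matrix (Fin m) (Fin m) ℝ) with hU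
  have hUmem := hA.eigenvectorUnitary.2
  have h1 : U * Uᴴ = 1 := by
    simpa [star_eq_conjTranspose, hU] using (mem_unitaryGroup_iff.mp hUmem)
  have h2 : Uᴴ * U = 1 := by
    simpa [star_eq_conjTranspose, hU] using (mem_unitaryGroup_iff'.mp hUmem)
  set u : Fin m → Fin m → ℝ := fun i k => U k i with hu
  have hunit : ∀ i, u i ⬝ᵥ u i = 1 := by
    intro i
    have := congrFun (congrFun h2 i) i
    simpa [mul_apply, conjTranspose_apply, dotProduct, one_apply] using this
  have heig : ∀ i, (C * Cᴴ) *ᵥ u i = hA.eigenvalues i • u i := by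
    intro i
    have hb : u i = ⇑(hA.eigenvectorBasis i) := by
      funext k; simp [hu, hU, IsHermitian.eigenvectorUnitary_apply]
    rw [hb]
    exact hA.mulVec_eigenvectorBasis i
  have hCu : ∀ i, (Cᴴ *ᵥ u i) ⬝ᵥ (Cᴴ *ᵥ u i) = hA.eigenvalues i := by
    intro i
    rw [dot_conjT, mulVec_mulVec, heig i]
    simp [dotProduct_smul, hunit i, smul_eq_mul]
  -- trace expansion
  have htr : trace (Wᴴ * C) = ∑ i, (Cᴴ *ᵥ u i) ⬝ᵥ (Wᴴ *ᵥ u i) := by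
    have h3 : trace (Wᴴ * C) = trace (Uᴴ * (C * Wᴴ) * U) := by
      rw [trace_mul_cycle, h1, one_mul, trace_mul_comm]
    rw [h3, trace]
    apply Finset.sum_congr rfl; intro i _
    rw [diag_apply, dot_quad U (C * Wᴴ) i]
    have : (C * Wᴴ) *ᵥ u i = C *ᵥ (Wᴴ *ᵥ u i) := (mulVec_mulVec _ _ _).symm
    rw [show (fun k => U k i) = u i from rfl, this, ← dot_conjT]
  -- termwise bound
  rw [htr, nuclearNorm]
  apply Finset.sum_le_sum
  intro i _
  have hcs : (Cᴴ *ᵥ u i) ⬝ᵥ (Wᴴ *ᵥ u i)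
      ≤ Real.sqrt ((Cᴴ *ᵥ u i) ⬝ᵥ (Cᴴ *ᵥ u i)) * Real.sqrt ((Wᴴ *ᵥ u i) ⬝ᵥ (Wᴴ *ᵥ u i)) := by
    have := Real.sum_mul_le_sqrt_mul_sqrt Finset.univ (fun k => (Cᴴ *ᵥ u i) k) (fun k => (Wᴴ *ᵥ u i) k)
    simpa [dotProduct, sq] using this
  have h4 : Real.sqrt ((Wᴴ *ᵥ u i) ⬝ᵥ (Wᴴ *ᵥ u i)) ≤ 1 := by
    have := hW (u i)
    rw [hunit i] at this
    simpa using Real.sqrt_le_sqrt this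
  have h5 : Real.sqrt ((Cᴴ *ᵥ u i) ⬝ᵥ (Cᴴ *ᵥ u i)) = singularValues C i := by
    rw [hCu i]; rfl
  calc (Cᴴ *ᵥ u i) ⬝ᵥ (Wᴴ *ᵥ u i) ≤ _ := hcs
    _ ≤ Real.sqrt ((Cᴴ *ᵥ u i) ⬝ᵥ (Cᴴ *ᵥ u i)) * 1 := by
        apply mul_le_mul_of_nonneg_left h4 (Real.sqrt_nonneg _)
    _ = singularValues C i := by rw [mul_one, h5]


lemma exists_dual (A : Matrix (Fin m) (Fin m) ℝ) :
    ∃ W : Matrix (Fin m) (Fin m) ℝ,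
      (∀ x : Fin m → ℝ, (Wᴴ *ᵥ x) ⬝ᵥ (Wᴴ *ᵥ x) ≤ x ⬝ᵥ x) ∧
      trace (Wᴴ * A) = nuclearNorm A := by
  set hA := isHermitian_mul_conjTranspose_self A with hhA
  set U : Matrix (Fin m) (Fin m) ℝ := (hA.eigenvectorUnitary : Matrix (Fin m) (Fin m) ℝ) with hU
  have hUmem := hA.eigenvectorUnitary.2
  have h1 : U * Uᴴ = 1 := by
    simpa [star_eq_conjTranspose, hU] using (mem_unitaryGroup_iff.mp hUmem)
  have h2 : Uᴴ * U = 1 := by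
    simpa [star_eq_conjTranspose, hU] using (mem_unitaryGroup_iff'.mp hUmem)
  set μ : Fin m → ℝ := hA.eigenvalues with hμ
  have hμ0 : ∀ i, 0 ≤ μ i := fun i =>
    (posSemidef_self_mul_conjTranspose A).eigenvalues_nonneg i
  have hdiag : Uᴴ * (A * Aᴴ) * U = diagonal μ := by
    have := hA.conjStarAlgAut_star_eigenvectorUnitary
    rw [Unitary.conjStarAlgAut_star_apply] at this
    simpa [star_eq_conjTranspose, hU, hμ, RCLike.ofReal_real_eq_id] using this
  set d : Fin m → ℝ := fun i => if μ i = 0 then 0 else (Real.sqrt (μ i))⁻¹ with hd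
  refine ⟨U * diagonal d * Uᴴ * A, ?_, ?_⟩
  · -- contraction
    intro x
    set W := U * diagonal d * Uᴴ * A with hW
    have hWT : Wᴴ = Aᴴ * (U * diagonal d * Uᴴ) := by
      simp [hW, conjTranspose_mul, diagonal_conjTranspose, mul_assoc]
    have hWWT : W * Wᴴ = U * diagonal (fun i => d i * μ i * d i) * Uᴴ := by
      rw [hWT, hW]
      calc U * diagonal d * Uᴴ * A * (Aᴴ * (U * diagonal d * Uᴴ))
          = U * diagonal d * (Uᴴ * (A * Aᴴ) * U) * (diagonal d * Uᴴ) := by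
            noncomm_ring
        _ = U * (diagonal d * diagonal μ * diagonal d) * Uᴴ := by
            rw [hdiag]; noncomm_ring
        _ = U * diagonal (fun i => d i * μ i * d i) * Uᴴ := by
            rw [diagonal_mul_diagonal, diagonal_mul_diagonal]
    have hχ : ∀ i, 0 ≤ d i * μ i * d i ∧ d i * μ i * d i ≤ 1 := by
      intro i; by_cases h : μ i = 0
      · simp [hd, h]
      · have hpos : 0 < μ i := lt_of_le_of_ne (hμ0 i) (Ne.symm h)
        have hs : 0 < Real.sqrt (μ i) := Real.sqrt_pos.mpr hpos
        have h1' : d i * μ i * d i = 1 := by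
          rw [hd]
          simp only [if_neg h]
          field_simp
          rw [Real.sq_sqrt hpos.le]
        rw [h1']
        norm_num
    have key : (Wᴴ *ᵥ x) ⬝ᵥ (Wᴴ *ᵥ x) = x ⬝ᵥ ((W * Wᴴ) *ᵥ x) := by
      rw [dot_conjT, mulVec_mulVec]
    set z := Uᴴ *ᵥ x with hz
    have hz2 : x ⬝ᵥ ((W * Wᴴ) *ᵥ x) = z ⬝ᵥ (diagonal (fun i => d i * μ i * d i) *ᵥ z) := by
      rw [hWWT, ← mulVec_mulVec, ← mulVec_mulVec, ← dot_conjT]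
    have hzz : z ⬝ᵥ z = x ⬝ᵥ x := by
      rw [hz, dot_conjT, mulVec_mulVec, h1, one_mulVec]
    rw [key, hz2, ← hzz]
    simp only [dotProduct, mulVec_diagonal]
    apply Finset.sum_le_sum
    intro i _
    have h0 := (hχ i).1
    have h1' := (hχ i).2
    nlinarith [sq_nonneg (z i)]
  · -- trace equality
    set W := U * diagonal d * Uᴴ * A with hW
    have hWT : Wᴴ = Aᴴ * (U * diagonal d * Uᴴ) := by
      simp [hW, conjTranspose_mul, diagonal_conjTranspose, mul_assoc]
    have h3 : trace (Wᴴ * A) = trace (diagonal μ * diagonal d) := by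
      rw [hWT]
      calc trace (Aᴴ * (U * diagonal d * Uᴴ) * A)
          = trace ((Uᴴ * (A * Aᴴ) * U) * diagonal d) := by
            rw [trace_mul_cycle]
            rw [show A * Aᴴ * (U * diagonal d * Uᴴ) = (A * Aᴴ * U * diagonal d) * Uᴴ by
              noncomm_ring]
            rw [trace_mul_comm]
            congr 1
            noncomm_ring
        _ = trace (diagonal μ * diagonal d) := by rw [hdiag]
    rw [h3, diagonal_mul_diagonal, trace_diagonal]
    have : nuclearNorm A = ∑ i, Real.sqrt (μ i) := rfl
    rw [this]
    apply Finset.sum_congr rfl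
    intro i _
    by_cases h : μ i = 0
    · simp [hd, h]
    · rw [hd]
      simp only [if_neg h]
      rw [mul_comm, inv_mul_eq_div, Real.div_sqrt]
end NucAux

/-- **Lemma.** For any square matrix `C ∈ ℝ^{n×n}` and any two-element subset
`S = {e 0, e 1}` of the index set (given by an injection `e : Fin 2 → Fin n`),
`‖C‖_* ≥ Σ_{i ∉ S} |C_{ii}| + ‖C_{S,S}‖_*`, where `C_{S,S}` is the `2 × 2`
principal submatrix of `C` indexed by `S`. -/
theorem sum_abs_diag_add_submatrix_le_nuclearNorm {n : ℕ}
    (C : Matrix (Fin n) (Fin n) ℝ) (e : Fin 2 → Fin n) (he : Function.Injective e) :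
    (∑ i ∈ Finset.univ \ {e 0, e 1}, |C i i|) + nuclearNorm (C.submatrix e e)
      ≤ nuclearNorm C := by
  obtain ⟨W₂, hc, ht⟩ := NucAux.exists_dual (C.submatrix e e)
  set R : Finset (Fin n) := Finset.image e Finset.univ with hR
  have hRmem : ∀ i, i ∈ R ↔ ∃ a, e a = i := by
    intro i; simp [hR]
  have hR2 : R = {e 0, e 1} := by
    rw [hR, show (Finset.univ : Finset (Fin 2)) = {0, 1} by decide]
    simp
  -- the big dual matrix
  set W : Matrix (Fin n) (Fin n) ℝ := Matrix.of (fun i j =>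
    if hi : ∃ a, e a = i then
      if hj : ∃ b, e b = j then W₂ hi.choose hj.choose else 0
    else if i = j then Real.sign (C i i) else 0) with hWdef
  -- sign facts
  have hsgn_mul : ∀ t : ℝ, Real.sign t * t = |t| := by
    intro t
    rcases lt_trichotomy t 0 with h | h | h
    · rw [Real.sign_of_neg h, abs_of_neg h]; ring
    · simp [h]
    · rw [Real.sign_of_pos h, abs_of_pos h]; ring
  have hsgn_sq : ∀ t : ℝ, Real.sign t * Real.sign t ≤ 1 := by
    intro t
    rcases lt_trichotomy t 0 with h | h | h
    · rw [Real.sign_of_neg h]; norm_num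
    · simp [h]
    · rw [Real.sign_of_pos h]; norm_num
  -- entry facts
  have hWee : ∀ a b, W (e a) (e b) = W₂ a b := by
    intro a b
    have hi : ∃ a', e a' = e a := ⟨a, rfl⟩
    have hj : ∃ b', e b' = e b := ⟨b, rfl⟩
    show (if hi : ∃ a', e a' = e a then
      if hj : ∃ b', e b' = e b then W₂ hi.choose hj.choose else 0
      else if e a = e b then Real.sign (C (e a) (e a)) else 0) = W₂ a b
    rw [dif_pos hi, dif_pos hj, he hi.choose_spec, he hj.choose_spec]
  have hWout : ∀ i j, ¬(∃ a, e a = i) → W i j =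
      if i = j then Real.sign (C i i) else 0 := by
    intro i j hi
    show (if hi' : ∃ a, e a = i then
      if hj : ∃ b, e b = j then W₂ hi'.choose hj.choose else 0
      else if i = j then Real.sign (C i i) else 0) = _
    rw [dif_neg hi]
  have hWmix : ∀ i j, ¬(∃ b, e b = j) → i ≠ j → W i j = 0 := by
    intro i j hj hij
    by_cases hi : ∃ a, e a = i
    · show (if hi' : ∃ a, e a = i then
        if hj' : ∃ b, e b = j then W₂ hi'.choose hj'.choose else 0
        else if i = j then Real.sign (C i i) else 0) = 0
      rw [dif_pos hi, dif_neg hj]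
    · rw [hWout i j hi, if_neg hij]
  -- column sums
  have hcol_out : ∀ (j) (x : Fin n → ℝ), j ∉ R →
      ∑ i, W i j * x i = Real.sign (C j j) * x j := by
    intro j x hj
    rw [hRmem] at hj
    rw [Finset.sum_eq_single j]
    · by_cases hjj : ∃ a, e a = j
      · exact absurd hjj hj
      · rw [hWout j j hj, if_pos rfl]
    · intro i _ hij
      rw [hWmix i j hj hij, zero_mul]
    · intro h; exact absurd (Finset.mem_univ j) h
  have hcol_in : ∀ (b : Fin 2) (x : Fin n → ℝ),
      ∑ i, W i (e b) * x i = ∑ a : Fin 2, W₂ a b * x (e a) := by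
    intro b x
    rw [← Finset.sum_subset (Finset.subset_univ R)]
    · rw [hR, Finset.sum_image (fun x _ y _ h => he h)]
      apply Finset.sum_congr rfl
      intro a _
      rw [hWee a b]
    · intro i _ hiR
      rw [hRmem] at hiR
      have hij : i ≠ e b := by
        intro hh; exact hiR ⟨b, hh.symm⟩
      by_cases hjb : ∃ b', e b' = e b
      · show (if hi' : ∃ a, e a = i then
          if hj' : ∃ b', e b' = e b then W₂ hi'.choose hj'.choose else 0
          else if i = e b then Real.sign (C i i) else 0) * x i = 0
        rw [dif_neg hiR, if_neg hij, zero_mul]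
      · exact absurd ⟨b, rfl⟩ hjb
  -- sums split
  have hsplit : ∀ f : Fin n → ℝ,
      ∑ j, f j = ∑ j ∈ Finset.univ \ R, f j + ∑ j ∈ R, f j := by
    intro f
    rw [Finset.sum_sdiff (Finset.subset_univ R)]
  -- trace identity
  have htrace : trace (Wᴴ * C) =
      (∑ j ∈ Finset.univ \ R, |C j j|) + nuclearNorm (C.submatrix e e) := by
    have h0 : trace (Wᴴ * C) = ∑ j, ∑ i, W i j * C i j := by
      simp only [trace, diag_apply, mul_apply, conjTranspose_apply, star_trivial]
    rw [h0, hsplit (fun j => ∑ i, W i j * C i j)]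
    congr 1
    · apply Finset.sum_congr rfl
      intro j hj
      rw [hcol_out j (fun i => C i j) (Finset.mem_sdiff.mp hj).2, hsgn_mul]
    · rw [← ht]
      have h1 : trace (W₂ᴴ * C.submatrix e e) = ∑ b, ∑ a, W₂ a b * C (e a) (e b) := by
        simp only [trace, diag_apply, mul_apply, conjTranspose_apply, star_trivial,
          submatrix_apply]
      rw [h1, hR, Finset.sum_image (fun x _ y _ h => he h)]
      apply Finset.sum_congr rfl
      intro b _
      rw [hcol_in b (fun i => C i (e b))]
  -- contraction
  have hcontr : ∀ x : Fin n → ℝ, (Wᴴ *ᵥ x) ⬝ᵥ (Wᴴ *ᵥ x) ≤ x ⬝ᵥ x := by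
    intro x
    have hg : ∀ j, (Wᴴ *ᵥ x) j = ∑ i, W i j * x i := by
      intro j
      simp only [mulVec, dotProduct, conjTranspose_apply, star_trivial]
    have hLHS : (Wᴴ *ᵥ x) ⬝ᵥ (Wᴴ *ᵥ x)
        = ∑ j, (∑ i, W i j * x i) * (∑ i, W i j * x i) := by
      simp only [dotProduct, hg]
    rw [hLHS, hsplit (fun j => (∑ i, W i j * x i) * (∑ i, W i j * x i)),
      show x ⬝ᵥ x = ∑ j, x j * x j from rfl,
      hsplit (fun j => x j * x j)]
    have hpart1 : ∑ j ∈ Finset.univ \ R, (∑ i, W i j * x i) * (∑ i, W i j * x i)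
        ≤ ∑ j ∈ Finset.univ \ R, x j * x j := by
      apply Finset.sum_le_sum
      intro j hj
      rw [hcol_out j x (Finset.mem_sdiff.mp hj).2]
      have := hsgn_sq (C j j)
      nlinarith [sq_nonneg (x j)]
    have hpart2 : ∑ j ∈ R, (∑ i, W i j * x i) * (∑ i, W i j * x i)
        ≤ ∑ j ∈ R, x j * x j := by
      rw [hR, Finset.sum_image (fun x _ y _ h => he h),
        Finset.sum_image (fun x _ y _ h => he h)]
      have hy : ∀ b, ∑ i, W i (e b) * x i = (W₂ᴴ *ᵥ (fun a => x (e a))) b := by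
        intro b
        rw [hcol_in b x]
        simp only [mulVec, dotProduct, conjTranspose_apply, star_trivial]
      calc ∑ b, (∑ i, W i (e b) * x i) * (∑ i, W i (e b) * x i)
          = (W₂ᴴ *ᵥ (fun a => x (e a))) ⬝ᵥ (W₂ᴴ *ᵥ (fun a => x (e a))) := by
            simp only [dotProduct, hy]
        _ ≤ (fun a => x (e a)) ⬝ᵥ (fun a => x (e a)) := hc _
        _ = ∑ b, x (e b) * x (e b) := rfl
    exact add_le_add hpart1 hpart2
  calc (∑ i ∈ Finset.univ \ {e 0, e 1}, |C i i|) + nuclearNorm (C.submatrix e e)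
      = trace (Wᴴ * C) := by rw [htrace, hR2]
    _ ≤ nuclearNorm C := NucAux.trace_le C W hcontr
end

section
/- Let D = {X ∈ 𝕊₊ⁿ : rank(X) ≤ k, f(‖X‖_*) ≤ 0} where k ≥ 2 and f : ℝ → ℝ is convex with bounded sublevel set {t : f(t) ≤ 0}. Then every extreme point of conv(D) has rank at most 1; equivalently, conv(D) equals the convex hull of {X ∈ 𝕊₊ⁿ : rank(X) ≤ 1, f(‖X‖_*) ≤ 0}. -/
open Matrix

lemma nuclearNorm_eq_trace {n : ℕ} {X : Matrix (Fin n) (Fin n) ℝ} (hX : X.PosSemidef) :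
    nuclearNorm X = X.trace := by
  have hpsd : (X * Xᴴ).PosSemidef := posSemidef_self_mul_conjTranspose X
  have hXX : X = hpsd.1.cfc Real.sqrt := by
    rw [← hpsd.1.cfc_eq, hX.1.eq]
    have hsa : IsSelfAdjoint X := hX.1.isSelfAdjoint
    have hnn : ∀ x ∈ spectrum ℝ X, 0 ≤ x := by
      intro x hx
      rw [hX.1.spectrum_real_eq_range_eigenvalues] at hx
      obtain ⟨i, rfl⟩ := hx
      exact hX.eigenvalues_nonneg i
    have hsq : X * X = cfc (fun x : ℝ => x * x) X := by
      rw [cfc_mul (fun x : ℝ => x) (fun x : ℝ => x) X, cfc_id' ℝ X]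
    rw [hsq, ← cfc_comp Real.sqrt (fun x : ℝ => x * x) X]
    conv_lhs => rw [← cfc_id' ℝ X]
    exact cfc_congr fun x hx => (Real.sqrt_mul_self (hnn x hx)).symm
  have htr : (hpsd.1.cfc Real.sqrt).trace = ∑ i, Real.sqrt (hpsd.1.eigenvalues i) := by
    rw [Matrix.IsHermitian.cfc, Unitary.conjStarAlgAut_apply, Matrix.trace_mul_cycle]
    rw [show (star hpsd.1.eigenvectorUnitary : Matrix (Fin n) (Fin n) ℝ) *
        hpsd.1.eigenvectorUnitary.1 = 1 from Unitary.coe_star_mul_self _, one_mul,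
      trace_diagonal]
    simp
  rw [← hXX] at htr
  rw [nuclearNorm, htr]
  rfl

lemma isHermitian_sum_rankOne {n : ℕ} {A : Matrix (Fin n) (Fin n) ℝ} (hA : A.IsHermitian) :
    A = ∑ i, hA.eigenvalues i •
      vecMulVec (⇑(hA.eigenvectorBasis i)) (⇑(hA.eigenvectorBasis i)) := by
  conv_lhs => rw [hA.spectral_theorem, Unitary.conjStarAlgAut_apply]
  ext a b
  simp only [Matrix.sum_apply, Matrix.smul_apply, vecMulVec_apply, smul_eq_mul,
    Matrix.mul_apply, Matrix.mul_diagonal, Matrix.star_apply, Function.comp_apply,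
    Matrix.IsHermitian.eigenvectorUnitary_apply, star_trivial, RCLike.ofReal_real_eq_id, id_eq,
    diagonal_apply, mul_ite, mul_zero, Finset.sum_ite_eq, Finset.sum_ite_eq',
    Finset.mem_univ, if_true]
  exact Finset.sum_congr rfl fun j _ => by ring

lemma trace_eq_sum_eigenvalues {n : ℕ} {A : Matrix (Fin n) (Fin n) ℝ} (hA : A.IsHermitian) :
    A.trace = ∑ i, hA.eigenvalues i := by
  conv_lhs => rw [hA.spectral_theorem, Unitary.conjStarAlgAut_apply]
  rw [Matrix.trace_mul_cycle]
  rw [show (star hA.eigenvectorUnitary : Matrix (Fin n) (Fin n) ℝ) *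
      hA.eigenvectorUnitary.1 = 1 from Unitary.coe_star_mul_self _, one_mul, trace_diagonal]
  simp

lemma vecMulVec_eq_mul_conjTranspose {n : ℕ} (v : Fin n → ℝ) :
    vecMulVec v v = replicateCol Unit v * (replicateCol Unit v)ᴴ := by
  rw [conjTranspose_replicateCol]
  rw [show star v = v from funext fun i => star_trivial _]
  exact vecMulVec_eq Unit v v

lemma posSemidef_smul_vecMulVec {n : ℕ} (v : Fin n → ℝ) {t : ℝ} (ht : 0 ≤ t) :
    (t • vecMulVec v v).PosSemidef := by
  have h : t • vecMulVec v v = vecMulVec (Real.sqrt t • v) (Real.sqrt t • v) := by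
    ext a b
    simp only [Matrix.smul_apply, vecMulVec_apply, Pi.smul_apply, smul_eq_mul]
    rw [show Real.sqrt t * v a * (Real.sqrt t * v b)
        = (Real.sqrt t * Real.sqrt t) * (v a * v b) by ring, Real.mul_self_sqrt ht]
  rw [h, vecMulVec_eq_mul_conjTranspose]
  exact posSemidef_self_mul_conjTranspose _

lemma rank_smul_vecMulVec_le {n : ℕ} (v : Fin n → ℝ) (t : ℝ) :
    (t • vecMulVec v v).rank ≤ 1 := by
  have h : t • vecMulVec v v = replicateCol Unit (t • v) * replicateRow Unit v := by
    rw [← vecMulVec_eq]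
    ext a b
    simp only [Matrix.smul_apply, vecMulVec_apply, Pi.smul_apply, smul_eq_mul]
    ring
  rw [h]
  calc (replicateCol Unit (t • v) * replicateRow Unit v).rank ≤ (replicateCol Unit (t • v)).rank := rank_mul_le_left _ _
    _ ≤ Fintype.card Unit := rank_le_card_width _
    _ = 1 := Fintype.card_unit

/-- **Example (strengthened rank `k̃ = 1`).** Let
`D = {X ∈ 𝕊₊ⁿ : rank X ≤ k, f(‖X‖_*) ≤ 0}` where `k ≥ 2` and `f : ℝ → ℝ` is
convex with bounded sublevel set `{t : f t ≤ 0}`.  Then every extreme point of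
`conv D` has rank at most `1`; equivalently, `conv D` equals the convex hull of
the rank-`≤ 1` version of `D`. -/
theorem extremePoint_rank_le_one_of_nuclearNorm_constraint
    (n k : ℕ) (hk : 2 ≤ k) (f : ℝ → ℝ)
    (hconv : ConvexOn ℝ Set.univ f)
    (hbdd : Bornology.IsBounded {t : ℝ | f t ≤ 0}) :
    (∀ X ∈ Set.extremePoints ℝ (convexHull ℝ
        {X : Matrix (Fin n) (Fin n) ℝ | X.PosSemidef ∧ X.rank ≤ k ∧ f (nuclearNorm X) ≤ 0}),
      X.rank ≤ 1)
    ∧ convexHull ℝ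
        {X : Matrix (Fin n) (Fin n) ℝ | X.PosSemidef ∧ X.rank ≤ k ∧ f (nuclearNorm X) ≤ 0}
      = convexHull ℝ
        {X : Matrix (Fin n) (Fin n) ℝ | X.PosSemidef ∧ X.rank ≤ 1 ∧ f (nuclearNorm X) ≤ 0} := by
  set D1 : Set (Matrix (Fin n) (Fin n) ℝ) :=
    {X | X.PosSemidef ∧ X.rank ≤ 1 ∧ f (nuclearNorm X) ≤ 0} with hD1
  set Dk : Set (Matrix (Fin n) (Fin n) ℝ) :=
    {X | X.PosSemidef ∧ X.rank ≤ k ∧ f (nuclearNorm X) ≤ 0} with hDk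
  have key : Dk ⊆ convexHull ℝ D1 := by
    rintro X ⟨hpsd, -, hf⟩
    have hA : X.IsHermitian := hpsd.1
    set t := X.trace with hts
    have hnn : nuclearNorm X = t := nuclearNorm_eq_trace hpsd
    rw [hnn] at hf
    have hev : ∀ i, 0 ≤ hA.eigenvalues i := hpsd.eigenvalues_nonneg
    have hsum : ∑ i, hA.eigenvalues i = t := (trace_eq_sum_eigenvalues hA).symm
    have hdot : ∀ i, ⇑(hA.eigenvectorBasis i) ⬝ᵥ ⇑(hA.eigenvectorBasis i) = 1 := by
      intro i
      have h1 : ‖hA.eigenvectorBasis i‖ = 1 := hA.eigenvectorBasis.orthonormal.1 i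
      have h2 : (inner ℝ (hA.eigenvectorBasis i) (hA.eigenvectorBasis i) : ℝ) = 1 := by
        rw [real_inner_self_eq_norm_sq, h1]; norm_num
      rw [← h2]
      simp only [PiLp.inner_apply, RCLike.inner_apply, conj_trivial, dotProduct]
    by_cases h0 : t = 0
    · -- all eigenvalues zero, X has rank 0
      have hall : ∀ i, hA.eigenvalues i = 0 := by
        intro i
        have := Finset.sum_eq_zero_iff_of_nonneg (fun i _ => hev i) |>.mp (hsum.trans h0)
        exact this i (Finset.mem_univ i)
      have hrank : X.rank = 0 := by
        rw [hA.rank_eq_card_non_zero_eigs]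
        simp [hall]
      exact subset_convexHull ℝ D1 ⟨hpsd, by omega, by rw [hnn]; exact hf⟩
    · have htpos : 0 < t := lt_of_le_of_ne
        (hsum ▸ Finset.sum_nonneg fun i _ => hev i) (Ne.symm h0)
      have hmem : ∀ i : Fin n,
          (t • vecMulVec (⇑(hA.eigenvectorBasis i)) (⇑(hA.eigenvectorBasis i))) ∈ D1 := by
        intro i
        have hz : (t • vecMulVec (⇑(hA.eigenvectorBasis i))
            (⇑(hA.eigenvectorBasis i))).PosSemidef :=
          posSemidef_smul_vecMulVec _ htpos.le
        refine ⟨hz, rank_smul_vecMulVec_le _ _, ?_⟩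
        have : nuclearNorm (t • vecMulVec (⇑(hA.eigenvectorBasis i))
            (⇑(hA.eigenvectorBasis i))) = t := by
          rw [nuclearNorm_eq_trace hz, trace_smul]
          rw [show (vecMulVec (⇑(hA.eigenvectorBasis i)) (⇑(hA.eigenvectorBasis i))).trace
            = ⇑(hA.eigenvectorBasis i) ⬝ᵥ ⇑(hA.eigenvectorBasis i) by
              simp [Matrix.trace, Matrix.diag, vecMulVec_apply, dotProduct]]
          rw [hdot i, smul_eq_mul, mul_one]
        rw [this]; exact hf
      have hXdec : X = ∑ i, (hA.eigenvalues i / t) •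
          (t • vecMulVec (⇑(hA.eigenvectorBasis i)) (⇑(hA.eigenvectorBasis i))) := by
        conv_lhs => rw [isHermitian_sum_rankOne hA]
        refine Finset.sum_congr rfl fun i _ => ?_
        rw [smul_smul, div_mul_cancel₀ _ h0]
      rw [hXdec]
      exact (convex_convexHull ℝ D1).sum_mem
        (fun i _ => div_nonneg (hev i) htpos.le)
        (by rw [← Finset.sum_div, hsum, div_self h0])
        (fun i _ => subset_convexHull ℝ D1 (hmem i))
  have hsub1 : D1 ⊆ Dk := fun X hX => ⟨hX.1, hX.2.1.trans (by omega), hX.2.2⟩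
  have heq : convexHull ℝ Dk = convexHull ℝ D1 :=
    le_antisymm (convexHull_min key (convex_convexHull ℝ D1)) (convexHull_mono hsub1)
  refine ⟨fun X hX => ?_, heq⟩
  rw [heq] at hX
  exact (extremePoints_convexHull_subset hX).2.1
end

section
/- Let T ⊆ ℝᴺ be a closed convex set and let H = {x : ⟨a_i, x⟩ = b_i, i = 1,…,m̃} be the intersection of m̃ linearly independent affine hyperplanes. If x is an extreme point of T ∩ H, then x is contained in a face of T of dimension at most m̃. -/
set_option maxHeartbeats 1000000

section FaceAt

variable {V : Type*} [AddCommGroup V] [Module ℝ V]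

/-- The minimal face of `T` at `x`: points `y ∈ T` such that `x` lies in an open
segment from `y` to some point of `T`. -/
def faceAt (T : Set V) (x : V) : Set V :=
  {y | y ∈ T ∧ ∃ z ∈ T, x ∈ openSegment ℝ y z}

lemma faceAt_subset (T : Set V) (x : V) : faceAt T x ⊆ T := fun _ h => h.1

lemma mem_faceAt_iff {T : Set V} {x y : V} :
    y ∈ faceAt T x ↔ y ∈ T ∧ ∃ δ : ℝ, 0 < δ ∧ x + δ • (x - y) ∈ T := by
  constructor
  · rintro ⟨hyT, z, hzT, s, s', hs, hs', hss, hxeq⟩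
    have hs'eq : s' = 1 - s := by linarith
    subst hs'eq
    have h1s : (1:ℝ) - s ≠ 0 := by linarith
    refine ⟨hyT, s / (1 - s), by positivity, ?_⟩
    have key : x + (s / (1 - s)) • (x - y) = z := by
      linear_combination (norm := match_scalars <;> field_simp <;> ring)
        (-((1 - s)⁻¹ : ℝ)) • hxeq
    rw [key]; exact hzT
  · rintro ⟨hyT, δ, hδ, hwT⟩
    have h1δ : (0:ℝ) < 1 + δ := by linarith
    refine ⟨hyT, x + δ • (x - y), hwT, δ / (1 + δ), 1 / (1 + δ),
      by positivity, by positivity, by field_simp; ring, ?_⟩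
    match_scalars <;> field_simp <;> ring

lemma mem_faceAt_self {T : Set V} {x : V} (hx : x ∈ T) : x ∈ faceAt T x := by
  rw [mem_faceAt_iff]
  exact ⟨hx, 1, one_pos, by rw [show x + (1:ℝ) • (x - x) = x by module]; exact hx⟩

lemma faceAt_extreme_aux {T : Set V} (hT : Convex ℝ T) {x p x₁ x₂ : V}
    (hx₁ : x₁ ∈ T) (hx₂ : x₂ ∈ T) (hp : p ∈ faceAt T x)
    {t t' : ℝ} (ht : 0 < t) (ht' : 0 < t') (htt : t + t' = 1)
    (hpeq : t • x₁ + t' • x₂ = p) : x₁ ∈ faceAt T x := by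
  have ht'eq : t' = 1 - t := by linarith
  subst ht'eq
  rw [mem_faceAt_iff] at hp ⊢
  obtain ⟨hpT, δ, hδ, hw⟩ := hp
  have h1 : (0:ℝ) < 1 + δ * (1 - t) := by positivity
  refine ⟨hx₁, t * δ / (1 + δ * (1 - t)), by positivity, ?_⟩
  have key : (1 / (1 + δ * (1 - t))) • (x + δ • (x - p)) +
      (δ * (1 - t) / (1 + δ * (1 - t))) • x₂
      = x + (t * δ / (1 + δ * (1 - t))) • (x - x₁) := by
    linear_combination (norm := match_scalars <;> field_simp [h1.ne'] <;> ring)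
      (δ / (1 + δ * (1 - t))) • hpeq
  rw [← key]
  exact hT hw hx₂ (by positivity) (by positivity) (by field_simp)

lemma isExtreme_faceAt {T : Set V} (hT : Convex ℝ T) (x : V) :
    IsExtreme ℝ T (faceAt T x) := by
  refine ⟨faceAt_subset T x, ?_⟩
  intro x₁ hx₁ x₂ hx₂ p hp hseg
  obtain ⟨t, t', ht, ht', htt, hpeq⟩ := hseg
  exact faceAt_extreme_aux hT hx₁ hx₂ hp ht ht' htt hpeq

lemma convex_faceAt {T : Set V} (hT : Convex ℝ T) (x : V) : Convex ℝ (faceAt T x) := by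
  intro y₁ hy₁ y₂ hy₂ θ₁ θ₂ hθ₁ hθ₂ hθ
  rw [mem_faceAt_iff] at hy₁ hy₂ ⊢
  obtain ⟨hy₁T, δ₁, hδ₁, hw₁⟩ := hy₁
  obtain ⟨hy₂T, δ₂, hδ₂, hw₂⟩ := hy₂
  have hθ₂eq : θ₂ = 1 - θ₁ := by linarith
  subst hθ₂eq
  have hE : (0:ℝ) < θ₁ * δ₂ + (1 - θ₁) * δ₁ := by
    rcases eq_or_lt_of_le hθ₁ with h | h
    · rw [← h]; simpa using hδ₁
    · have h1 : (0:ℝ) < θ₁ * δ₂ := by positivity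
      have h2 : (0:ℝ) ≤ (1 - θ₁) * δ₁ := by positivity
      linarith
  refine ⟨hT hy₁T hy₂T hθ₁ hθ₂ hθ,
    δ₁ * δ₂ / (θ₁ * δ₂ + (1 - θ₁) * δ₁), by positivity, ?_⟩
  have key : (θ₁ * δ₂ / (θ₁ * δ₂ + (1 - θ₁) * δ₁)) • (x + δ₁ • (x - y₁)) +
      ((1 - θ₁) * δ₁ / (θ₁ * δ₂ + (1 - θ₁) * δ₁)) • (x + δ₂ • (x - y₂))
      = x + (δ₁ * δ₂ / (θ₁ * δ₂ + (1 - θ₁) * δ₁)) •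
          (x - (θ₁ • y₁ + (1 - θ₁) • y₂)) := by
    match_scalars <;> field_simp [hE.ne'] <;> ring
  rw [← key]
  exact hT hw₁ hw₂ (div_nonneg (by positivity) hE.le)
    (div_nonneg (by positivity) hE.le)
    (by rw [← add_div, div_self hE.ne'])

lemma faceAt_neg {T : Set V} {x v : V} {ε : ℝ} (hε : 0 < ε)
    (h : x + ε • v ∈ faceAt T x) :
    ∃ δ : ℝ, 0 < δ ∧ x + δ • (-v) ∈ faceAt T x := by
  rw [mem_faceAt_iff] at h
  obtain ⟨hyT, δ, hδ, hw⟩ := h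
  have h1 : x + δ • (x - (x + ε • v)) = x + (δ * ε) • (-v) := by module
  rw [h1] at hw
  refine ⟨δ * ε, by positivity, ?_⟩
  rw [mem_faceAt_iff]
  refine ⟨hw, 1 / δ, by positivity, ?_⟩
  have h2 : x + (1 / δ) • (x - (x + (δ * ε) • (-v))) = x + ε • v := by
    match_scalars <;> field_simp <;> ring
  rw [h2]; exact hyT

lemma faceAt_shrink {T : Set V} (hT : Convex ℝ T) {x v : V} {ε : ℝ} (hε : 0 < ε)
    (hx : x ∈ T) (h : x + ε • v ∈ faceAt T x) {δ : ℝ} (hδ : 0 < δ) (hδε : δ ≤ ε) :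
    x + δ • v ∈ faceAt T x := by
  have heq : (1 - δ / ε) • x + (δ / ε) • (x + ε • v) = x + δ • v := by
    match_scalars <;> field_simp <;> ring
  rw [← heq]
  exact convex_faceAt hT x (mem_faceAt_self hx) h
    (by rw [sub_nonneg]; exact div_le_one_of_le₀ hδε hε.le)
    (by positivity) (by ring)

lemma faceAt_span {T : Set V} (hT : Convex ℝ T) {x : V} (hx : x ∈ T) :
    ∀ v ∈ Submodule.span ℝ ((· - x) '' faceAt T x),
      ∃ ε : ℝ, 0 < ε ∧ x + ε • v ∈ faceAt T x := by
  intro v hv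
  induction hv using Submodule.span_induction with
  | mem w hw =>
      obtain ⟨y, hy, rfl⟩ := hw
      exact ⟨1, one_pos, by rw [show x + (1:ℝ) • (y - x) = y by module]; exact hy⟩
  | zero =>
      exact ⟨1, one_pos, by
        rw [show x + (1:ℝ) • (0:V) = x by module]; exact mem_faceAt_self hx⟩
  | add v w hv hw ihv ihw =>
      obtain ⟨ε₁, hε₁, h1⟩ := ihv
      obtain ⟨ε₂, hε₂, h2⟩ := ihw
      have hε : (0:ℝ) < min ε₁ ε₂ / 2 := by positivity
      have h1' : x + (2 * (min ε₁ ε₂ / 2)) • v ∈ faceAt T x :=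
        faceAt_shrink hT hε₁ hx h1 (by positivity)
          (by linarith [min_le_left ε₁ ε₂])
      have h2' : x + (2 * (min ε₁ ε₂ / 2)) • w ∈ faceAt T x :=
        faceAt_shrink hT hε₂ hx h2 (by positivity)
          (by linarith [min_le_right ε₁ ε₂])
      refine ⟨min ε₁ ε₂ / 2, hε, ?_⟩
      have heq : (1/2 : ℝ) • (x + (2 * (min ε₁ ε₂ / 2)) • v) +
          (1/2 : ℝ) • (x + (2 * (min ε₁ ε₂ / 2)) • w)
          = x + (min ε₁ ε₂ / 2) • (v + w) := by module
      rw [← heq]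
      exact convex_faceAt hT x h1' h2' (by norm_num) (by norm_num) (by norm_num)
  | smul c v hv ih =>
      obtain ⟨ε, hε, h⟩ := ih
      rcases lt_trichotomy c 0 with hc | hc | hc
      · obtain ⟨δ, hδ, hmem⟩ := faceAt_neg hε h
        refine ⟨δ / (-c), div_pos hδ (neg_pos.mpr hc), ?_⟩
        have hcc : (δ / (-c)) • (c • v) = δ • (-v) := by
          rw [smul_smul, smul_neg, ← neg_smul]
          congr 1
          field_simp [hc.ne]
        rw [hcc]; exact hmem
      · subst hc
        exact ⟨1, one_pos, by
          rw [show x + (1:ℝ) • ((0:ℝ) • v) = x by module]; exact mem_faceAt_self hx⟩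
      · refine ⟨ε / c, by positivity, ?_⟩
        have hcc : (ε / c) • (c • v) = ε • v := by
          rw [smul_smul]; congr 1; field_simp
        rw [hcc]; exact h

end FaceAt

/-- **Lemma (extreme points and low-dimensional faces).** Let `T ⊆ ℝᴺ` be a
closed convex set and `H = {x : ⟨aᵢ, x⟩ = bᵢ, i = 1,…,m̃}` the intersection of
`m̃` linearly independent affine hyperplanes.  If `x` is an extreme point of
`T ∩ H`, then `x` is contained in a face of `T` (a convex subset `F ⊆ T`
satisfying the face property, formalized as `IsExtreme ℝ T F`) of dimension at
most `m̃`, where the dimension of a face is that of its affine hull. -/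
theorem extremePoint_mem_low_dim_face
    (N m : ℕ) (T : Set (EuclideanSpace ℝ (Fin N)))
    (hTclosed : IsClosed T) (hTconv : Convex ℝ T)
    (a : Fin m → EuclideanSpace ℝ (Fin N)) (b : Fin m → ℝ)
    (hind : LinearIndependent ℝ a)
    (x : EuclideanSpace ℝ (Fin N))
    (hx : x ∈ Set.extremePoints ℝ
      (T ∩ {y : EuclideanSpace ℝ (Fin N) | ∀ i, (inner ℝ (a i) y : ℝ) = b i})) :
    ∃ F : Set (EuclideanSpace ℝ (Fin N)),
      IsExtreme ℝ T F ∧ Convex ℝ F ∧ x ∈ F ∧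
      Module.finrank ℝ (affineSpan ℝ F).direction ≤ m := by
  classical
  obtain ⟨⟨hxT, hxH⟩, hxext⟩ := hx
  simp only [Set.mem_setOf_eq] at hxH
  refine ⟨faceAt T x, isExtreme_faceAt hTconv x, convex_faceAt hTconv x,
    mem_faceAt_self hxT, ?_⟩
  set W : Submodule ℝ (EuclideanSpace ℝ (Fin N)) :=
    (Submodule.span ℝ (Set.range a))ᗮ with hW_def
  -- F ∩ H = {x}
  have hFH : ∀ p ∈ faceAt T x, (∀ i, (inner ℝ (a i) p : ℝ) = b i) → p = x := by
    intro p hp hpH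
    obtain ⟨hpT, z, hzT, s, s', hs, hs', hss, hxeq⟩ := hp
    have hzH : ∀ i, (inner ℝ (a i) z : ℝ) = b i := by
      intro i
      have h1 := congrArg (fun w : EuclideanSpace ℝ (Fin N) => (inner ℝ (a i) w : ℝ)) hxeq
      simp only [inner_add_right, real_inner_smul_right, hpH i, hxH i] at h1
      have hs'0 : s' ≠ 0 := ne_of_gt hs'
      have h2 : s' * (inner ℝ (a i) z : ℝ) = s' * b i := by
        linear_combination h1 - b i * hss
      exact mul_left_cancel₀ hs'0 h2
    exact (hxext ⟨hpT, hpH⟩ ⟨hzT, hzH⟩ ⟨s, s', hs, hs', hss, hxeq⟩)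
  -- direction ∩ W = ⊥
  have hdir : (affineSpan ℝ (faceAt T x)).direction ⊓ W = ⊥ := by
    rw [Submodule.eq_bot_iff]
    rintro v ⟨hv1, hv2⟩
    rw [direction_affineSpan,
      vectorSpan_eq_span_vsub_set_right ℝ (mem_faceAt_self hxT)] at hv1
    simp only [vsub_eq_sub] at hv1
    obtain ⟨ε, hε, hmem⟩ := faceAt_span hTconv hxT v hv1
    have hvH : ∀ i, (inner ℝ (a i) v : ℝ) = 0 := fun i =>
      (Submodule.mem_orthogonal _ v).mp hv2 (a i)
        (Submodule.subset_span (Set.mem_range_self i))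
    have heq : x + ε • v = x := by
      apply hFH _ hmem
      intro i
      rw [inner_add_right, real_inner_smul_right, hxH i, hvH i]; ring
    have hε0 : ε • v = 0 := by rwa [add_eq_left] at heq
    rcases smul_eq_zero.mp hε0 with h | h
    · exact absurd h (ne_of_gt hε)
    · exact h
  -- dimension count
  have hspan : Module.finrank ℝ (Submodule.span ℝ (Set.range a)) = m := by
    rw [finrank_span_eq_card hind, Fintype.card_fin]
  have hWrank : m + Module.finrank ℝ W = N := by
    have h := Submodule.finrank_add_finrank_orthogonal
      (K := Submodule.span ℝ (Set.range a))
    rwa [hspan, finrank_euclideanSpace_fin, ← hW_def] at h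
  have hsum := Submodule.finrank_sup_add_finrank_inf_eq
    (affineSpan ℝ (faceAt T x)).direction W
  rw [hdir, finrank_bot, add_zero] at hsum
  have hle : Module.finrank ℝ
      ((affineSpan ℝ (faceAt T x)).direction ⊔ W :
        Submodule ℝ (EuclideanSpace ℝ (Fin N))) ≤ N := by
    have h := Submodule.finrank_le ((affineSpan ℝ (faceAt T x)).direction ⊔ W)
    rwa [finrank_euclideanSpace_fin] at h
  omega
end

section
/- Let D = {X ∈ 𝕊ⁿ : X diagonal, rank(X) ≤ k, f(diag(X)) ≤ 0} with f continuous, convex, symmetric and sign-invariant, and let k̃ ≤ k be the strengthened rank. If F^d is a d-dimensional face of conv(D), then every matrix in F^d has rank at most k̃ + d. -/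
open Matrix

/-- The sparse (diagonal-matrix) low-rank spectral domain set:
`D_j = {X ∈ 𝕊ⁿ : X diagonal, rank X ≤ j, f(diag X) ≤ 0}`. -/
def sparseDomainSet (n j : ℕ) (f : (Fin n → ℝ) → ℝ) :
    Set (Matrix (Fin n) (Fin n) ℝ) :=
  {X | X = Matrix.diagonal (Matrix.diag X) ∧ X.rank ≤ j ∧ f (Matrix.diag X) ≤ 0}

private lemma extreme_mem_of_sum {E : Type*} [AddCommGroup E] [Module ℝ E]
    {A F : Set E} (hAF : IsExtreme ℝ A F) (hA : Convex ℝ A)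
    {ι : Type*} (v : ι → E) (t : Finset ι) :
    ∀ w : ι → ℝ, (∀ i ∈ t, v i ∈ A) → (∀ i ∈ t, 0 < w i) → (∑ i ∈ t, w i = 1) →
      ((∑ i ∈ t, w i • v i) ∈ F) → ∀ i ∈ t, v i ∈ F := by
  classical
  induction t using Finset.induction_on with
  | empty => intro w _ _ _ _ i hi; exact absurd hi (Finset.notMem_empty i)
  | @insert i s his ih =>
    intro w hv hw h1 hmem j hj
    by_cases hs : s = ∅
    · subst hs
      have hj' : j = i := by simpa using hj
      subst hj'
      have hwi : w j = 1 := by simpa using h1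
      rw [Finset.sum_insert (Finset.notMem_empty j), Finset.sum_empty, add_zero, hwi,
        one_smul] at hmem
      exact hmem
    · have hsne : s.Nonempty := Finset.nonempty_of_ne_empty hs
      have hW : 0 < ∑ x ∈ s, w x :=
        Finset.sum_pos (fun x hx => hw x (Finset.mem_insert_of_mem hx)) hsne
      rw [Finset.sum_insert his] at h1
      have hwi : w i + (∑ x ∈ s, w x) = 1 := h1
      have hy1 : ∑ x ∈ s, ((∑ x ∈ s, w x)⁻¹ * w x) = 1 := by
        rw [← Finset.mul_sum, inv_mul_cancel₀ hW.ne']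
      have hyA : (∑ x ∈ s, ((∑ x ∈ s, w x)⁻¹ * w x) • v x) ∈ A := by
        refine hA.sum_mem (fun x hx => ?_) hy1 (fun x hx => hv x (Finset.mem_insert_of_mem hx))
        exact mul_nonneg (inv_nonneg.2 hW.le) (hw x (Finset.mem_insert_of_mem hx)).le
      have hyval : (∑ x ∈ s, w x) • (∑ x ∈ s, ((∑ x ∈ s, w x)⁻¹ * w x) • v x)
          = ∑ x ∈ s, w x • v x := by
        rw [Finset.smul_sum]
        refine Finset.sum_congr rfl (fun x hx => ?_)
        rw [smul_smul, ← mul_assoc, mul_inv_cancel₀ hW.ne', one_mul]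
      rw [Finset.sum_insert his, ← hyval] at hmem
      have hseg : (w i • v i + (∑ x ∈ s, w x) •
          (∑ x ∈ s, ((∑ x ∈ s, w x)⁻¹ * w x) • v x)) ∈
          openSegment ℝ (v i) (∑ x ∈ s, ((∑ x ∈ s, w x)⁻¹ * w x) • v x) :=
        ⟨w i, ∑ x ∈ s, w x, hw i (Finset.mem_insert_self i s), hW, hwi, rfl⟩
      have hiF := hAF.2 (hv i (Finset.mem_insert_self i s)) hyA hmem hseg
      have hyF := hAF.2 hyA (hv i (Finset.mem_insert_self i s)) hmem
        (by rw [openSegment_symm]; exact hseg)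
      rcases Finset.mem_insert.1 hj with rfl | hjs
      · exact hiF
      · refine ih (fun x => (∑ x ∈ s, w x)⁻¹ * w x)
          (fun x hx => hv x (Finset.mem_insert_of_mem hx))
          (fun x hx => mul_pos (inv_pos.2 hW) (hw x (Finset.mem_insert_of_mem hx)))
          hy1 hyF j hjs

set_option maxHeartbeats 1600000 in
/-- **Theorem (rank bound for faces, diagonal matrix space, sign-invariant case).**
Let `D = {X ∈ 𝕊ⁿ : X diagonal, rank X ≤ k, f(diag X) ≤ 0}` with `f` continuous,
convex, symmetric (permutation-invariant) and sign-invariant (`f(x) = f(|x|)`),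
and let `k̃ ≤ k` be the strengthened rank (smallest positive integer with
`conv D = conv D_{k̃}`).  If `F^d` is a `d`-dimensional face of `conv D`, then
every matrix in `F^d` has rank at most `k̃ + d`. -/
theorem face_rank_bound_diagonal
    (n k kTilde d : ℕ) (f : (Fin n → ℝ) → ℝ)
    (hf_cont : Continuous f)
    (hf_convex : ConvexOn ℝ Set.univ f)
    (hf_symm : ∀ (x : Fin n → ℝ) (σ : Equiv.Perm (Fin n)), f (x ∘ σ) = f x)
    (hf_sign : ∀ x : Fin n → ℝ, f (fun i => |x i|) = f x)
    (hktpos : 1 ≤ kTilde) (hktk : kTilde ≤ k)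
    (hconv : convexHull ℝ (sparseDomainSet n kTilde f)
      = convexHull ℝ (sparseDomainSet n k f))
    (hmin : ∀ j, 1 ≤ j →
      convexHull ℝ (sparseDomainSet n j f)
        = convexHull ℝ (sparseDomainSet n k f) → kTilde ≤ j)
    (Fd : Set (Matrix (Fin n) (Fin n) ℝ))
    (hFace : IsExtreme ℝ (convexHull ℝ (sparseDomainSet n k f)) Fd)
    (hFconv : Convex ℝ Fd)
    (hFdim : Module.finrank ℝ (affineSpan ℝ Fd).direction = d) :
    ∀ X ∈ Fd, X.rank ≤ kTilde + d := by
  classical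
  intro X hX
  have hsub : sparseDomainSet n kTilde f ⊆ sparseDomainSet n k f :=
    fun Y hY => ⟨hY.1, le_trans hY.2.1 hktk, hY.2.2⟩
  have hXA : X ∈ convexHull ℝ (sparseDomainSet n k f) := hFace.1 hX
  -- everything in the hull is diagonal
  have hDiagSet : convexHull ℝ (sparseDomainSet n k f) ⊆
      {Y : Matrix (Fin n) (Fin n) ℝ | Y = Matrix.diagonal (Matrix.diag Y)} := by
    apply convexHull_min (fun Z hZ => hZ.1)
    intro Y hY Z hZ p q hp hq hpq
    simp only [Set.mem_setOf_eq] at hY hZ ⊢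
    ext i1 i2
    by_cases h : i1 = i2
    · subst h
      simp [Matrix.add_apply, Matrix.smul_apply, Matrix.diagonal_apply_eq, Matrix.diag]
    · have h1 : Y i1 i2 = 0 := by rw [hY]; exact Matrix.diagonal_apply_ne _ h
      have h2 : Z i1 i2 = 0 := by rw [hZ]; exact Matrix.diagonal_apply_ne _ h
      simp [Matrix.add_apply, Matrix.smul_apply, Matrix.diagonal_apply_ne _ h, h1, h2]
  -- rank of a diagonal matrix = cardinality of the support of its diagonal
  have hrank_eq : ∀ Y : Matrix (Fin n) (Fin n) ℝ, Y = Matrix.diagonal (Matrix.diag Y) →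
      Y.rank = (Finset.univ.filter (fun m => Matrix.diag Y m ≠ 0)).card := by
    intro Y hY
    conv_lhs => rw [hY]
    rw [Matrix.rank_diagonal, Fintype.card_subtype]
  -- representation of X as a positive convex combination of elements of D_kTilde
  have hXk : X ∈ convexHull ℝ (sparseDomainSet n kTilde f) := by rw [hconv]; exact hXA
  rw [convexHull_eq] at hXk
  obtain ⟨ι, t₀, w, v, hw0, hw1, hvD₀, hcm⟩ := hXk
  rw [Finset.centerMass_eq_of_sum_1 _ _ hw1] at hcm
  set t : Finset ι := t₀.filter (fun i => 0 < w i) with htdef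
  have hwpos : ∀ i ∈ t, 0 < w i := fun i hi => (Finset.mem_filter.1 hi).2
  have hw1' : ∑ i ∈ t, w i = 1 := by
    rw [htdef, Finset.sum_filter_of_ne (fun x hx hne => lt_of_le_of_ne (hw0 x hx) (Ne.symm hne))]
    exact hw1
  have hsum : ∑ i ∈ t, w i • v i = X := by
    rw [htdef, Finset.sum_filter_of_ne]
    · exact hcm
    · intro x hx hne
      refine lt_of_le_of_ne (hw0 x hx) fun h => hne ?_
      rw [← h, zero_smul]
  have hvD : ∀ i ∈ t, v i ∈ sparseDomainSet n kTilde f :=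
    fun i hi => hvD₀ i (Finset.mem_filter.1 hi).1
  have hvA : ∀ i ∈ t, v i ∈ convexHull ℝ (sparseDomainSet n k f) :=
    fun i hi => subset_convexHull ℝ _ (hsub (hvD i hi))
  have hvF : ∀ i ∈ t, v i ∈ Fd := by
    refine extreme_mem_of_sum hFace (convex_convexHull ℝ _) v t w hvA hwpos hw1' ?_
    rw [hsum]; exact hX
  have htne : t.Nonempty := by
    rcases Finset.eq_empty_or_nonempty t with h | h
    · rw [h, Finset.sum_empty] at hw1'; norm_num at hw1'
    · exact h
  obtain ⟨i₀, hi₀, hmax⟩ := t.exists_max_image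
    (fun i => (Finset.univ.filter (fun m => Matrix.diag (v i) m ≠ 0)).card) htne
  set Y := v i₀ with hYdef
  set yv : Fin n → ℝ := Matrix.diag Y with hyvdef
  set T : Finset (Fin n) := Finset.univ.filter (fun m => yv m ≠ 0) with hTdef
  have hYD : Y ∈ sparseDomainSet n kTilde f := hvD i₀ hi₀
  have hTk : T.card ≤ kTilde := by
    have h1 := hYD.2.1
    rw [hrank_eq Y hYD.1] at h1
    exact h1
  have hyv0 : ∀ m, m ∉ T → yv m = 0 := by
    intro m hm
    by_contra h
    exact hm (Finset.mem_filter.2 ⟨Finset.mem_univ m, h⟩)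
  set S : Finset (Fin n) := Finset.univ.filter (fun m => Matrix.diag X m ≠ 0) with hSdef
  -- the key swap construction
  have key : ∀ j ∈ S \ T, ∃ Wm ∈ Fd, Matrix.diag Wm j ≠ 0 ∧
      ∀ m, m ∉ T → m ≠ j → Matrix.diag Wm m = 0 := by
    intro j hj
    obtain ⟨hjS, hjT⟩ := Finset.mem_sdiff.1 hj
    have hXj : Matrix.diag X j ≠ 0 := (Finset.mem_filter.1 hjS).2
    have hyj : yv j = 0 := hyv0 j hjT
    have hXdiag : Matrix.diag X j = ∑ i ∈ t, w i * Matrix.diag (v i) j := by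
      rw [← hsum]
      simp [Matrix.diag, Matrix.sum_apply]
    have hzex : ∃ iw ∈ t, Matrix.diag (v iw) j ≠ 0 := by
      by_contra h
      push_neg at h
      refine hXj ?_
      rw [hXdiag]
      exact Finset.sum_eq_zero fun i hi => by rw [h i hi, mul_zero]
    obtain ⟨iw, hiw, hzj⟩ := hzex
    set Z := v iw with hZdef
    set zv : Fin n → ℝ := Matrix.diag Z with hzvdef
    have hZD : Z ∈ sparseDomainSet n kTilde f := hvD iw hiw
    set TZ : Finset (Fin n) := Finset.univ.filter (fun m => zv m ≠ 0) with hTZdef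
    have hjTZ : j ∈ TZ := Finset.mem_filter.2 ⟨Finset.mem_univ j, hzj⟩
    have hcardZ : TZ.card ≤ T.card := hmax iw hiw
    have hnotsub : ¬ T ⊆ TZ := by
      intro hTsub
      have : T = TZ := Finset.eq_of_subset_of_card_le hTsub hcardZ
      exact hjT (this ▸ hjTZ)
    obtain ⟨l, hlT, hlz⟩ := Finset.not_subset.1 hnotsub
    have hyl : yv l ≠ 0 := (Finset.mem_filter.1 hlT).2
    have hzl : zv l = 0 := by
      by_contra h
      exact hlz (Finset.mem_filter.2 ⟨Finset.mem_univ l, h⟩)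
    have hjl : j ≠ l := by
      intro h
      exact hyl (by rw [← h]; exact hyj)
    -- constants
    set bb := |yv l| with hbbdef
    set gg := |zv j| with hggdef
    have hbb : 0 < bb := abs_pos.2 hyl
    have hgg : 0 < gg := abs_pos.2 hzj
    set Δ := bb + gg with hΔdef
    have hΔ : 0 < Δ := by positivity
    set c := gg / (2 * Δ) with hcdef
    set e := bb / (2 * Δ) with hedef
    have hc : 0 < c := div_pos hgg (by linarith)
    have he : 0 < e := div_pos hbb (by linarith)
    have hchalf : c < 1 / 2 := by
      rw [hcdef, div_lt_iff₀ (by linarith)]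
      rw [hΔdef]; linarith
    have hehalf : e < 1 / 2 := by
      rw [hedef, div_lt_iff₀ (by linarith)]
      rw [hΔdef]; linarith
    set a := 1 / 2 - c with hadef
    set b := 1 / 2 - e with hbdef
    have ha : 0 < a := by rw [hadef]; linarith
    have hb : 0 < b := by rw [hbdef]; linarith
    set tval := (bb / gg) * zv j with htvaldef
    set sval := (gg / bb) * yv l with hsvaldef
    have htval : tval ≠ 0 := mul_ne_zero (div_pos hbb hgg).ne' hzj
    have habs_tval : |tval| = bb := by
      rw [htvaldef, abs_mul, abs_div, abs_abs, abs_abs, ← hggdef, div_mul_cancel₀ _ hgg.ne']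
    have habs_sval : |sval| = gg := by
      rw [hsvaldef, abs_mul, abs_div, abs_abs, abs_abs, ← hbbdef, div_mul_cancel₀ _ hbb.ne']
    -- the swapped vectors
    set yhat : Fin n → ℝ := Function.update (Function.update yv l 0) j tval with hyhatdef
    set zhat : Fin n → ℝ := Function.update (Function.update zv j 0) l sval with hzhatdef
    have hyhat_j : yhat j = tval := by rw [hyhatdef, Function.update_self]
    have hyhat_l : yhat l = 0 := by
      rw [hyhatdef, Function.update_of_ne (Ne.symm hjl), Function.update_self]
    have hyhat_m : ∀ m, m ≠ j → m ≠ l → yhat m = yv m := by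
      intro m h1 h2
      rw [hyhatdef, Function.update_of_ne h1, Function.update_of_ne h2]
    have hzhat_j : zhat j = 0 := by
      rw [hzhatdef, Function.update_of_ne hjl, Function.update_self]
    have hzhat_l : zhat l = sval := by rw [hzhatdef, Function.update_self]
    have hzhat_m : ∀ m, m ≠ j → m ≠ l → zhat m = zv m := by
      intro m h1 h2
      rw [hzhatdef, Function.update_of_ne h2, Function.update_of_ne h1]
    -- f-values are preserved (swap + sign invariance)
    have hfy : f yhat = f yv := by
      have h1 : (fun m => |yhat m|) = (fun m => |yv m|) ∘ (Equiv.swap j l) := by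
        funext m
        simp only [Function.comp_apply]
        by_cases hm1 : m = j
        · rw [hm1, Equiv.swap_apply_left, hyhat_j, habs_tval, hbbdef]
        · by_cases hm2 : m = l
          · rw [hm2, Equiv.swap_apply_right, hyhat_l, hyj]
          · rw [Equiv.swap_apply_of_ne_of_ne hm1 hm2, hyhat_m m hm1 hm2]
      calc f yhat = f (fun m => |yhat m|) := (hf_sign yhat).symm
        _ = f ((fun m => |yv m|) ∘ (Equiv.swap j l)) := by rw [h1]
        _ = f (fun m => |yv m|) := hf_symm _ _
        _ = f yv := hf_sign yv
    have hfz : f zhat = f zv := by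
      have h1 : (fun m => |zhat m|) = (fun m => |zv m|) ∘ (Equiv.swap j l) := by
        funext m
        simp only [Function.comp_apply]
        by_cases hm1 : m = j
        · rw [hm1, Equiv.swap_apply_left, hzhat_j, hzl]
        · by_cases hm2 : m = l
          · rw [hm2, Equiv.swap_apply_right, hzhat_l, habs_sval, hggdef]
          · rw [Equiv.swap_apply_of_ne_of_ne hm1 hm2, hzhat_m m hm1 hm2]
      calc f zhat = f (fun m => |zhat m|) := (hf_sign zhat).symm
        _ = f ((fun m => |zv m|) ∘ (Equiv.swap j l)) := by rw [h1]
        _ = f (fun m => |zv m|) := hf_symm _ _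
        _ = f zv := hf_sign zv
    -- membership of the swapped matrices in D_kTilde
    have hYhatD : Matrix.diagonal yhat ∈ sparseDomainSet n kTilde f := by
      refine ⟨by rw [Matrix.diag_diagonal], ?_, ?_⟩
      · rw [hrank_eq _ (by rw [Matrix.diag_diagonal]), Matrix.diag_diagonal]
        have hsupp : Finset.univ.filter (fun m => yhat m ≠ 0) ⊆ insert j (T.erase l) := by
          intro m hm
          have hm0 := (Finset.mem_filter.1 hm).2
          by_cases hm1 : m = j
          · rw [hm1]; exact Finset.mem_insert_self _ _
          · refine Finset.mem_insert_of_mem ?_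
            by_cases hm2 : m = l
            · exact absurd (hm2 ▸ hyhat_l) hm0
            · rw [hyhat_m m hm1 hm2] at hm0
              exact Finset.mem_erase.2 ⟨hm2, Finset.mem_filter.2 ⟨Finset.mem_univ m, hm0⟩⟩
        calc (Finset.univ.filter (fun m => yhat m ≠ 0)).card
            ≤ (insert j (T.erase l)).card := Finset.card_le_card hsupp
          _ ≤ (T.erase l).card + 1 := Finset.card_insert_le _ _
          _ = T.card - 1 + 1 := by rw [Finset.card_erase_of_mem hlT]
          _ ≤ kTilde := by
              have : 1 ≤ T.card := Finset.card_pos.2 ⟨l, hlT⟩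
              omega
      · rw [Matrix.diag_diagonal, hfy]
        exact hYD.2.2
    have hZhatD : Matrix.diagonal zhat ∈ sparseDomainSet n kTilde f := by
      refine ⟨by rw [Matrix.diag_diagonal], ?_, ?_⟩
      · rw [hrank_eq _ (by rw [Matrix.diag_diagonal]), Matrix.diag_diagonal]
        have hsupp : Finset.univ.filter (fun m => zhat m ≠ 0) ⊆ insert l (TZ.erase j) := by
          intro m hm
          have hm0 := (Finset.mem_filter.1 hm).2
          by_cases hm2 : m = l
          · rw [hm2]; exact Finset.mem_insert_self _ _
          · refine Finset.mem_insert_of_mem ?_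
            by_cases hm1 : m = j
            · exact absurd (hm1 ▸ hzhat_j) hm0
            · rw [hzhat_m m hm1 hm2] at hm0
              exact Finset.mem_erase.2 ⟨hm1, Finset.mem_filter.2 ⟨Finset.mem_univ m, hm0⟩⟩
        calc (Finset.univ.filter (fun m => zhat m ≠ 0)).card
            ≤ (insert l (TZ.erase j)).card := Finset.card_le_card hsupp
          _ ≤ (TZ.erase j).card + 1 := Finset.card_insert_le _ _
          _ = TZ.card - 1 + 1 := by rw [Finset.card_erase_of_mem hjTZ]
          _ ≤ kTilde := by
              have h1 : 1 ≤ TZ.card := Finset.card_pos.2 ⟨j, hjTZ⟩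
              have h2 := hZD.2.1
              rw [hrank_eq Z hZD.1] at h2
              omega
      · rw [Matrix.diag_diagonal, hfz]
        exact hZD.2.2
    -- the exact convex-combination identity on diagonal vectors
    have h2Δ : (2 : ℝ) * Δ ≠ 0 := by positivity
    have hkey1 : c * tval = e * zv j := by
      rw [htvaldef, hcdef, hedef]
      field_simp
    have hkey2 : e * sval = c * yv l := by
      rw [hsvaldef, hcdef, hedef]
      field_simp
    have hvec' : ∀ m, a * yv m + c * yhat m + (b * zv m + e * zhat m)
        = 1 / 2 * yv m + 1 / 2 * zv m := by
      intro m
      by_cases hm1 : m = j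
      · rw [hm1, hyhat_j, hzhat_j, hyj, hbdef]
        linear_combination hkey1
      · by_cases hm2 : m = l
        · rw [hm2, hyhat_l, hzhat_l, hzl, hadef]
          linear_combination hkey2
        · rw [hyhat_m m hm1 hm2, hzhat_m m hm1 hm2, hadef, hbdef]
          ring
    have hYdiag : Y = Matrix.diagonal yv := hYD.1
    have hZdiag : Z = Matrix.diagonal zv := hZD.1
    have hmat : a • Y + c • Matrix.diagonal yhat + (b • Z + e • Matrix.diagonal zhat)
        = (1 / 2 : ℝ) • Y + (1 / 2 : ℝ) • Z := by
      ext i1 i2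
      by_cases h : i1 = i2
      · subst h
        have hY' : Y i1 i1 = yv i1 := rfl
        have hZ' : Z i1 i1 = zv i1 := rfl
        simp only [Matrix.add_apply, Matrix.smul_apply, Matrix.diagonal_apply_eq, smul_eq_mul,
          hY', hZ']
        exact hvec' i1
      · have h1 : Y i1 i2 = 0 := by rw [hYdiag]; exact Matrix.diagonal_apply_ne _ h
        have h2 : Z i1 i2 = 0 := by rw [hZdiag]; exact Matrix.diagonal_apply_ne _ h
        simp [Matrix.add_apply, Matrix.smul_apply, Matrix.diagonal_apply_ne _ h, h1, h2]
    have hμF : ((1 / 2 : ℝ) • Y + (1 / 2 : ℝ) • Z) ∈ Fd :=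
      hFconv (hvF i₀ hi₀) (hvF iw hiw) (by norm_num) (by norm_num) (by norm_num)
    have h1c : 0 < 1 - c := by linarith
    have habe : a + b + e = 1 - c := by rw [hadef, hbdef]; ring
    -- the residual point
    set Rm := (1 - c)⁻¹ • (a • Y + b • Z + e • Matrix.diagonal zhat) with hRmdef
    have hRmA : Rm ∈ convexHull ℝ (sparseDomainSet n k f) := by
      have hYA : Y ∈ convexHull ℝ (sparseDomainSet n k f) := hvA i₀ hi₀
      have hZA : Z ∈ convexHull ℝ (sparseDomainSet n k f) := hvA iw hiw
      have hZhA : Matrix.diagonal zhat ∈ convexHull ℝ (sparseDomainSet n k f) :=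
        subset_convexHull ℝ _ (hsub hZhatD)
      have h1 : Rm = ((1 - c)⁻¹ * a) • Y + (((1 - c)⁻¹ * b) • Z
          + ((1 - c)⁻¹ * e) • Matrix.diagonal zhat) := by
        rw [hRmdef, smul_add, smul_add, smul_smul, smul_smul, smul_smul, add_assoc]
      rw [h1]
      have hsum1 : (1 - c)⁻¹ * a + ((1 - c)⁻¹ * b + (1 - c)⁻¹ * e) = 1 := by
        rw [← mul_add, ← mul_add, ← add_assoc, habe, inv_mul_cancel₀ h1c.ne']
      have hinner : ((1 - c)⁻¹ * b / ((1 - c)⁻¹ * b + (1 - c)⁻¹ * e)) • Z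
          + ((1 - c)⁻¹ * e / ((1 - c)⁻¹ * b + (1 - c)⁻¹ * e)) • Matrix.diagonal zhat
          ∈ convexHull ℝ (sparseDomainSet n k f) := by
        have hbe : 0 < (1 - c)⁻¹ * b + (1 - c)⁻¹ * e := by positivity
        refine (convex_convexHull ℝ _) hZA hZhA (by positivity) (by positivity) ?_
        field_simp
      have hbe : 0 < (1 - c)⁻¹ * b + (1 - c)⁻¹ * e := by positivity
      have h2 : ((1 - c)⁻¹ * b) • Z + ((1 - c)⁻¹ * e) • Matrix.diagonal zhat
          = ((1 - c)⁻¹ * b + (1 - c)⁻¹ * e) •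
            (((1 - c)⁻¹ * b / ((1 - c)⁻¹ * b + (1 - c)⁻¹ * e)) • Z
            + ((1 - c)⁻¹ * e / ((1 - c)⁻¹ * b + (1 - c)⁻¹ * e)) • Matrix.diagonal zhat) := by
        rw [smul_add, smul_smul, smul_smul, mul_div_cancel₀ _ hbe.ne', mul_div_cancel₀ _ hbe.ne']
      rw [h2]
      exact (convex_convexHull ℝ _) hYA hinner (by positivity) hbe.le hsum1
    have hseg : ((1 / 2 : ℝ) • Y + (1 / 2 : ℝ) • Z)
        ∈ openSegment ℝ (Matrix.diagonal yhat) Rm := by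
      refine ⟨c, 1 - c, hc, h1c, by ring, ?_⟩
      rw [hRmdef, smul_inv_smul₀ h1c.ne', ← hmat]
      abel
    have hYhatF : Matrix.diagonal yhat ∈ Fd :=
      (hFace.2 (subset_convexHull ℝ _ (hsub hYhatD)) hRmA hμF hseg)
    refine ⟨Matrix.diagonal yhat, hYhatF, ?_, ?_⟩
    · rw [Matrix.diag_diagonal, hyhat_j]
      exact htval
    · intro m hmT hmj
      rw [Matrix.diag_diagonal]
      by_cases hm2 : m = l
      · exact absurd (hm2 ▸ hlT) hmT
      · rw [hyhat_m m hmj hm2]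
        exact hyv0 m hmT
  -- choose the witnesses and build a linearly independent family in the direction
  have key' : ∀ j : {j : Fin n // j ∈ S \ T}, ∃ Wm ∈ Fd, Matrix.diag Wm j.1 ≠ 0 ∧
      ∀ m, m ∉ T → m ≠ j.1 → Matrix.diag Wm m = 0 := fun j => key j.1 j.2
  choose Wm hWmF hWmj hWm0 using key'
  have hYF : Y ∈ Fd := hvF i₀ hi₀
  have hmemdir : ∀ j : {j : Fin n // j ∈ S \ T}, Wm j - Y ∈ (affineSpan ℝ Fd).direction := by
    intro j
    have h1 : Wm j ∈ affineSpan ℝ Fd := subset_affineSpan ℝ Fd (hWmF j)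
    have h2 : Y ∈ affineSpan ℝ Fd := subset_affineSpan ℝ Fd hYF
    simpa [vsub_eq_sub] using AffineSubspace.vsub_mem_direction h1 h2
  have hLI0 : LinearIndependent ℝ (fun j : {j : Fin n // j ∈ S \ T} => Wm j - Y) := by
    rw [Fintype.linearIndependent_iff]
    intro g hg j₀
    have hj₀ := Finset.mem_sdiff.1 j₀.2
    have hYe : Y j₀.1 j₀.1 = 0 := hyv0 j₀.1 hj₀.2
    have hzero := congrArg (fun M : Matrix (Fin n) (Fin n) ℝ => M j₀.1 j₀.1) hg
    simp only [Matrix.sum_apply, Matrix.smul_apply, Matrix.sub_apply, smul_eq_mul,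
      Matrix.zero_apply] at hzero
    have hterm : ∀ i : {j : Fin n // j ∈ S \ T},
        g i * ((Wm i) j₀.1 j₀.1 - Y j₀.1 j₀.1)
          = if i = j₀ then g j₀ * (Wm j₀) j₀.1 j₀.1 else 0 := by
      intro i
      rw [hYe, sub_zero]
      by_cases hij : i = j₀
      · rw [hij, if_pos rfl]
      · have hne : j₀.1 ≠ i.1 := fun h => hij (Subtype.ext h.symm)
        have h0 : (Wm i) j₀.1 j₀.1 = 0 := hWm0 i j₀.1 hj₀.2 hne
        rw [if_neg hij, h0, mul_zero]
    rw [Finset.sum_congr rfl (fun i _ => hterm i)] at hzero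
    simp only [Finset.sum_ite_eq', Finset.mem_univ, if_pos] at hzero
    exact (mul_eq_zero.1 hzero).resolve_right (hWmj j₀)
  have hLI : LinearIndependent ℝ (fun j : {j : Fin n // j ∈ S \ T} =>
      (⟨Wm j - Y, hmemdir j⟩ : (affineSpan ℝ Fd).direction)) := by
    refine LinearIndependent.of_comp (affineSpan ℝ Fd).direction.subtype ?_
    exact hLI0
  have hcardST : (S \ T).card ≤ d := by
    rw [← hFdim, ← Fintype.card_coe]
    exact hLI.fintype_card_le_finrank
  -- final counting
  have hXdiag : X = Matrix.diagonal (Matrix.diag X) := hDiagSet hXA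
  rw [hrank_eq X hXdiag]
  have hScard : S.card ≤ T.card + (S \ T).card := by
    calc S.card ≤ (T ∪ (S \ T)).card := by
          refine Finset.card_le_card fun m hm => ?_
          by_cases h : m ∈ T
          · exact Finset.mem_union_left _ h
          · exact Finset.mem_union_right _ (Finset.mem_sdiff.2 ⟨hm, h⟩)
      _ ≤ T.card + (S \ T).card := Finset.card_union_le _ _
  calc (Finset.univ.filter (fun m => Matrix.diag X m ≠ 0)).card = S.card := rfl
    _ ≤ T.card + (S \ T).card := hScard
    _ ≤ kTilde + d := Nat.add_le_add hTk hcardST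
end
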